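/- Let G be a profinite group isomorphic to Z_p, let γ be a topological generator of G, let A be a ring, and let M be a discrete A[G]-module all of whose elements are of p-primary torsion. Then the map d_γ on the induced module Ind_{A,G}(M) of continuous functions f: G → M, defined by d_γ(f)(g) = γ·f(γ^{-1}g) − f(g), is surjective; hence there is a short exact sequence 0 → M → Ind_{A,G}(M) → Ind_{A,G}(M) → 0 where the first map sends x to the function g ↦ g·x. -/

import Mathlib

private lemma lv_iff (p : ℕ) [Fact p.Prime] (n : ℕ) (x : ℤ_[p]) :
    PadicInt.toZModPow n x = 0 ↔ ‖x‖ ≤ (p : ℝ) ^ (-(n : ℤ)) := by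
  rw [PadicInt.norm_le_pow_iff_mem_span_pow, ← PadicInt.ker_toZModPow, RingHom.mem_ker]

private lemma lv_mono (p : ℕ) [Fact p.Prime] {m n : ℕ} (h : m ≤ n) {x : ℤ_[p]}
    (hx : PadicInt.toZModPow n x = 0) : PadicInt.toZModPow m x = 0 := by
  rw [lv_iff] at hx ⊢
  refine hx.trans (zpow_le_zpow_right₀ ?_ ?_)
  · exact_mod_cast (Fact.out : p.Prime).one_le
  · omega

private lemma lc_toZModPow (p : ℕ) [Fact p.Prime] (n : ℕ) :
    IsLocallyConstant (PadicInt.toZModPow n : ℤ_[p] → ZMod (p ^ n)) := by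
  have hp : (0 : ℝ) < p := by exact_mod_cast (Fact.out : p.Prime).pos
  rw [IsLocallyConstant.iff_exists_open]
  intro x
  refine ⟨Metric.ball x ((p : ℝ) ^ (-(n : ℤ) + 1)), Metric.isOpen_ball, ?_, ?_⟩
  · rw [Metric.mem_ball, dist_self]
    positivity
  · intro y hy
    rw [Metric.mem_ball, dist_eq_norm, ← PadicInt.norm_le_pow_iff_norm_lt_pow_add_one] at hy
    have h0 : PadicInt.toZModPow n (y - x) = 0 := (lv_iff p n _).2 hy
    rw [map_sub, sub_eq_zero] at h0
    exact h0

/-!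
STATEMENT 0.  Let `G` be a profinite group isomorphic to `ℤ_p`, `γ` a topological
generator of `G`, `A` a ring, and `M` a discrete `A[G]`-module all of whose elements are
of `p`-primary torsion.  Then the map `d_γ` on the induced module `Ind_{A,G}(M)` of
continuous (= locally constant) functions `f : G → M`, defined by
`d_γ(f)(g) = γ·f(γ⁻¹g) - f(g)`, is surjective; hence there is a short exact sequence
`0 → M → Ind_{A,G}(M) → Ind_{A,G}(M) → 0` where the first map sends `x` to `g ↦ g·x`.

The `A`-linear action of `G` on `M` is presented as a monoid homomorphism
`ρ : G →* Module.End A M`; discreteness of `M` means that all stabilizers are open.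
-/

theorem statement0 (p : ℕ) [Fact p.Prime]
    -- `G` : a profinite group isomorphic to `ℤ_p`
    (G : Type*) [Group G] [TopologicalSpace G] [IsTopologicalGroup G]
    [CompactSpace G] [T2Space G] [TotallyDisconnectedSpace G]
    (e : G ≃* Multiplicative ℤ_[p]) (he : Continuous e) (he' : Continuous e.symm)
    -- `γ` : a topological generator of `G`
    (γ : G) (hγ : (Subgroup.zpowers γ).topologicalClosure = ⊤)
    -- `M` : a discrete `A[G]`-module, all of whose elements are of `p`-primary torsion
    (A : Type*) [Ring A] (M : Type*) [AddCommGroup M] [Module A M]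
    (ρ : G →* Module.End A M)
    (hdisc : ∀ m : M, IsOpen {g : G | ρ g m = m})
    (htors : ∀ m : M, ∃ k : ℕ, p ^ k • m = 0) :
    -- `d_γ` is surjective on `Ind_{A,G}(M)`, the module of continuous functions `G → M`
    (∀ f : LocallyConstant G M, ∃ h : LocallyConstant G M,
      ∀ g : G, ρ γ (h (γ⁻¹ * g)) - h g = f g) ∧
    -- hence the sequence `0 → M → Ind_{A,G}(M) → Ind_{A,G}(M) → 0` is exact :
    -- injectivity of `ε : x ↦ (g ↦ g·x)` ...
    (∀ x y : M, (∀ g : G, ρ g x = ρ g y) → x = y) ∧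
    -- ... and exactness in the middle : `ker d_γ = image ε`
    (∀ f : LocallyConstant G M,
      (∀ g : G, ρ γ (f (γ⁻¹ * g)) - f g = 0) ↔ (∃ x : M, ∀ g : G, f g = ρ g x)) := by
  have hp : p.Prime := Fact.out
  -- the additive coordinate
  set θ : G → ℤ_[p] := fun g => Multiplicative.toAdd (e g) with hθdef
  set ι : ℤ_[p] → G := fun x => e.symm (Multiplicative.ofAdd x) with hιdef
  have θι : ∀ x, θ (ι x) = x := fun x => by simp [hθdef, hιdef]
  have ιθ : ∀ g, ι (θ g) = g := fun g => by simp [hθdef, hιdef]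
  have θcont : Continuous θ := continuous_toAdd.comp he
  have ιcont : Continuous ι := he'.comp continuous_ofAdd
  have θmul : ∀ a b, θ (a * b) = θ a + θ b := fun a b => by simp [hθdef]
  have θinv : ∀ a, θ a⁻¹ = -θ a := fun a => by simp [hθdef]
  set χ : ℤ_[p] := θ γ with hχdef
  have θpow : ∀ i : ℕ, θ (γ ^ i) = (i : ℤ_[p]) * χ := by
    intro i
    induction i with
    | zero => simp [hθdef]
    | succ i ih => rw [pow_succ, θmul, ih]; push_cast; ring
  -- smallness of powers
  have hsmall : ∀ ε : ℝ, 0 < ε → ∃ n : ℕ, (p : ℝ) ^ (-(n : ℤ)) < ε := by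
    intro ε hε
    obtain ⟨n, hn⟩ := exists_pow_lt_of_lt_one hε
      (show (p : ℝ)⁻¹ < 1 by
        rw [inv_lt_one_iff₀]; right; exact_mod_cast hp.one_lt)
    exact ⟨n, by rw [zpow_neg, zpow_natCast, ← inv_pow]; exact hn⟩
  -- χ is a unit
  have hχunit : IsUnit χ := by
    rw [PadicInt.isUnit_iff]
    by_contra hne
    have hlt : ‖χ‖ < 1 := lt_of_le_of_ne (PadicInt.norm_le_one χ) hne
    have hχ0 : PadicInt.toZModPow 1 χ = 0 := by
      rw [← RingHom.mem_ker, PadicInt.ker_toZModPow, Ideal.mem_span_singleton, pow_one]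
      exact (PadicInt.norm_lt_one_iff_dvd χ).1 hlt
    have hlcS : IsLocallyConstant (fun g => PadicInt.toZModPow 1 (θ g)) :=
      (lc_toZModPow p 1).comp_continuous θcont
    have hθzpow : ∀ z : ℤ, θ (γ ^ z) = (z : ℤ_[p]) * χ := by
      intro z
      obtain ⟨i, rfl | rfl⟩ := z.eq_nat_or_neg
      · rw [zpow_natCast, θpow]; push_cast; ring
      · rw [zpow_neg, zpow_natCast, θinv, θpow]; push_cast; ring
    have hsub : (Subgroup.zpowers γ : Set G) ⊆ {g : G | PadicInt.toZModPow 1 (θ g) = 0} := by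
      rintro g ⟨z, rfl⟩
      show PadicInt.toZModPow 1 (θ (γ ^ z)) = 0
      rw [hθzpow, map_mul, hχ0, mul_zero]
    have hclosed : IsClosed {g : G | PadicInt.toZModPow 1 (θ g) = 0} := by
      rw [← isOpen_compl_iff]
      exact hlcS {(0 : ZMod (p ^ 1))}ᶜ
    have htop : closure (Subgroup.zpowers γ : Set G) = Set.univ := by
      have := congrArg (fun s : Subgroup G => (s : Set G)) hγ
      simpa [Subgroup.topologicalClosure_coe] using this
    have hall : ∀ g : G, PadicInt.toZModPow 1 (θ g) = 0 := by
      intro g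
      have : g ∈ closure (Subgroup.zpowers γ : Set G) := by rw [htop]; trivial
      exact hclosed.closure_subset_iff.2 hsub this
    have h1 := hall (ι 1)
    rw [θι, map_one] at h1
    haveI : Fact (1 < p ^ 1) := ⟨by simpa using hp.one_lt⟩
    exact one_ne_zero h1
  -- level-constancy of locally constant functions
  have hconst : ∀ f : LocallyConstant G M, ∃ n₁ : ℕ, ∀ g g' : G,
      PadicInt.toZModPow n₁ (θ g - θ g') = 0 → f g = f g' := by
    intro f
    have hF : IsLocallyConstant (fun x : ℤ_[p] => f (ι x)) :=
      f.isLocallyConstant.comp_continuous ιcont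
    have key : ∀ x : ℤ_[p], ∃ n : ℕ,
        ∀ y, ‖y - x‖ ≤ (p : ℝ) ^ (-(n : ℤ)) → f (ι y) = f (ι x) := by
      intro x
      obtain ⟨U, hUopen, hxU, hU⟩ := (IsLocallyConstant.iff_exists_open _).1 hF x
      obtain ⟨ε, hε, hball⟩ := Metric.isOpen_iff.1 hUopen x hxU
      obtain ⟨n, hn⟩ := hsmall ε hε
      refine ⟨n, fun y hy => hU y (hball ?_)⟩
      rw [Metric.mem_ball, dist_eq_norm]
      exact lt_of_le_of_lt hy hn
    choose nn hnn using key
    obtain ⟨t, ht⟩ := IsCompact.elim_finite_subcover (isCompact_univ (X := ℤ_[p]))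
      (fun x => Metric.ball x ((p : ℝ) ^ (-(nn x : ℤ) + 1)))
      (fun x => Metric.isOpen_ball)
      (by
        intro x _
        rw [Set.mem_iUnion]
        refine ⟨x, ?_⟩
        rw [Metric.mem_ball, dist_self]
        have : (0 : ℝ) < p := by exact_mod_cast hp.pos
        positivity)
    set n₁ : ℕ := t.sup nn with hn₁def
    refine ⟨n₁, fun g g' hgg => ?_⟩
    have hmem : θ g' ∈ ⋃ x ∈ t, Metric.ball x ((p : ℝ) ^ (-(nn x : ℤ) + 1)) :=
      ht (Set.mem_univ _)
    rw [Set.mem_iUnion₂] at hmem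
    obtain ⟨x, hxt, hx⟩ := hmem
    rw [Metric.mem_ball, dist_eq_norm, ← PadicInt.norm_le_pow_iff_norm_lt_pow_add_one] at hx
    rw [lv_iff] at hgg
    have hle : (p : ℝ) ^ (-(n₁ : ℤ)) ≤ (p : ℝ) ^ (-(nn x : ℤ)) := by
      apply zpow_le_zpow_right₀
      · exact_mod_cast hp.one_le
      · have h4 : nn x ≤ n₁ := hn₁def ▸ Finset.le_sup (f := nn) hxt
        omega
    have hgx : ‖θ g - x‖ ≤ (p : ℝ) ^ (-(nn x : ℤ)) := by
      have h3 : θ g - x = (θ g - θ g') + (θ g' - x) := by ring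
      rw [h3]
      refine le_trans (PadicInt.nonarchimedean _ _) (max_le (hgg.trans hle) hx)
    have e1 : f (ι (θ g)) = f (ι x) := hnn x (θ g) hgx
    have e2 : f (ι (θ g')) = f (ι x) := hnn x (θ g') hx
    rw [ιθ] at e1 e2
    rw [e1, e2]
  -- open stabilizers give levels
  have hstab : ∀ m : M, ∃ s : ℕ, ∀ g : G,
      PadicInt.toZModPow s (θ g) = 0 → ρ g m = m := by
    intro m
    have hopen : IsOpen (ι ⁻¹' {g : G | ρ g m = m}) := (hdisc m).preimage ιcont
    have h0 : (0 : ℤ_[p]) ∈ ι ⁻¹' {g : G | ρ g m = m} := by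
      show ρ (ι 0) m = m
      have : ι 0 = 1 := by simp [hιdef]
      rw [this, map_one]
      rfl
    obtain ⟨ε, hε, hball⟩ := Metric.isOpen_iff.1 hopen 0 h0
    obtain ⟨s, hs⟩ := hsmall ε hε
    refine ⟨s, fun g hg => ?_⟩
    have hmem : θ g ∈ ι ⁻¹' {g : G | ρ g m = m} := by
      apply hball
      rw [Metric.mem_ball, dist_zero_right]
      rw [lv_iff] at hg
      exact lt_of_le_of_lt hg hs
    rw [Set.mem_preimage, Set.mem_setOf_eq, ιθ] at hmem
    exact hmem
  -- the main construction
  have main : ∀ f : LocallyConstant G M, ∃ h : LocallyConstant G M,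
      ∀ g : G, ρ γ (h (γ⁻¹ * g)) - h g = f g := by
    intro f
    obtain ⟨n₁, hn₁⟩ := hconst f
    obtain ⟨s, hs⟩ : ∃ s : ℕ, ∀ (x g : G),
        PadicInt.toZModPow s (θ g) = 0 → ρ g (f x) = f x := by
      have hfin := f.range_finite
      choose st hst using hstab
      refine ⟨hfin.toFinset.sup st, fun x g hg => ?_⟩
      have hx : f x ∈ hfin.toFinset := by
        rw [Set.Finite.mem_toFinset]
        exact ⟨x, rfl⟩
      exact hst (f x) g (lv_mono p (Finset.le_sup hx) hg)
    set n : ℕ := max n₁ s with hndef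
    set N : ℕ := p ^ n with hNdef
    have hfc : ∀ g g' : G, PadicInt.toZModPow n (θ g - θ g') = 0 → f g = f g' :=
      fun g g' h => hn₁ g g' (lv_mono p (le_max_left _ _) h)
    have hfcp : ∀ i j : ℕ, ((i : ZMod (p ^ n)) = j) → f (γ ^ i) = f (γ ^ j) := by
      intro i j hij
      apply hfc
      rw [θpow, θpow, ← sub_mul, map_mul, map_sub, map_natCast, map_natCast, hij,
        sub_self, zero_mul]
    have hfixN : ∀ x : G, ρ (γ ^ N) (f x) = f x := by
      intro x
      apply hs
      rw [θpow, map_mul, map_natCast]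
      have hsn : s ≤ n := le_max_right _ _
      have : (N : ZMod (p ^ s)) = 0 := by
        rw [hNdef, ← Nat.add_sub_cancel' hsn, pow_add, Nat.cast_mul, ZMod.natCast_self,
          zero_mul]
      rw [this, zero_mul]
    set E : Module.End A M := ρ γ with hEdef
    set h : ℕ → M := fun m => -∑ j ∈ Finset.range m, (E ^ j) (f (γ ^ (m - j))) with hhdef
    have h0 : h 0 = 0 := by simp [hhdef]
    have hrec : ∀ i, h (i + 1) = E (h i) - f (γ ^ (i + 1)) := by
      intro i
      show -∑ j ∈ Finset.range (i + 1), (E ^ j) (f (γ ^ (i + 1 - j)))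
        = E (-∑ j ∈ Finset.range i, (E ^ j) (f (γ ^ (i - j)))) - f (γ ^ (i + 1))
      rw [Finset.sum_range_succ', map_neg, map_sum]
      have : ∀ j ∈ Finset.range i,
          (E ^ (j + 1)) (f (γ ^ (i + 1 - (j + 1)))) = E ((E ^ j) (f (γ ^ (i - j)))) := by
        intro j hj
        have hij : i + 1 - (j + 1) = i - j := by omega
        rw [hij, pow_succ', Module.End.mul_apply]
      rw [Finset.sum_congr rfl this]
      simp only [pow_zero, Module.End.one_apply, Nat.sub_zero]
      abel
    have hEfix : ∀ m, (E ^ N) (h m) = h m := by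
      intro m
      show (E ^ N) (-∑ j ∈ Finset.range m, (E ^ j) (f (γ ^ (m - j))))
        = -∑ j ∈ Finset.range m, (E ^ j) (f (γ ^ (m - j)))
      rw [map_neg, map_sum, neg_inj]
      refine Finset.sum_congr rfl fun j _ => ?_
      rw [← Module.End.mul_apply, pow_mul_comm, Module.End.mul_apply]
      congr 1
      rw [hEdef, ← map_pow]
      exact hfixN _
    have hstep : ∀ K : ℕ, (∀ i : ℕ, f (γ ^ (i + K)) = f (γ ^ i)) →
        ∀ i, h (i + K) = h i + (E ^ i) (h K) := by
      intro K hK i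
      induction i with
      | zero => simp [h0]
      | succ i ih =>
        have h1 : i + 1 + K = (i + K) + 1 := by omega
        rw [h1, hrec, ih, hrec, map_add]
        have h2 : f (γ ^ (i + K + 1)) = f (γ ^ (i + 1)) := by
          have : i + K + 1 = (i + 1) + K := by omega
          rw [this, hK]
        rw [h2, pow_succ' E i, Module.End.mul_apply]
        abel
    have hfixpow : ∀ (K : ℕ) (x : M), (E ^ K) x = x → ∀ r : ℕ, (E ^ (r * K)) x = x := by
      intro K x hx r
      induction r with
      | zero => simp
      | succ r ih =>
        have : (r + 1) * K = r * K + K := by ring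
        rw [this, pow_add, Module.End.mul_apply, hx, ih]
    have hblock : ∀ K : ℕ, (∀ i : ℕ, f (γ ^ (i + K)) = f (γ ^ i)) → ((E ^ K) (h K) = h K) →
        ∀ r : ℕ, h (r * K) = r • h K := by
      intro K hK hfix r
      induction r with
      | zero => simp [h0]
      | succ r ih =>
        have h1 : (r + 1) * K = r * K + K := by ring
        rw [h1, hstep K hK, ih, hfixpow K (h K) hfix r, succ_nsmul]
    -- the congruence hypotheses for the two block sizes
    have hKcongN : ∀ i : ℕ, f (γ ^ (i + N)) = f (γ ^ i) := by
      intro i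
      apply hfcp
      have hz : ((p ^ n : ℕ) : ZMod (p ^ n)) = 0 := ZMod.natCast_self _
      push_cast at hz ⊢
      rw [hNdef]
      push_cast
      rw [hz, add_zero]
    obtain ⟨k, hk⟩ := htors (h N)
    set n' : ℕ := n + k with hn'def
    set N' : ℕ := p ^ n' with hN'def
    have hnn' : n ≤ n' := Nat.le_add_right n k
    have hN'eq : N' = p ^ k * N := by
      rw [hN'def, hNdef, hn'def, pow_add, mul_comm]
    have hKcongN' : ∀ i : ℕ, f (γ ^ (i + N')) = f (γ ^ i) := by
      intro i
      apply hfcp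
      have hz : ((p ^ n : ℕ) : ZMod (p ^ n)) = 0 := ZMod.natCast_self _
      push_cast at hz ⊢
      rw [hN'eq, hNdef]
      push_cast
      rw [hz, mul_zero, add_zero]
    have hhN' : h N' = 0 := by
      rw [hN'eq, hblock N hKcongN (hEfix N) (p ^ k)]
      exact hk
    have hper : ∀ i, h (i + N') = h i := by
      intro i
      rw [hstep N' hKcongN' i, hhN', map_zero, add_zero]
    -- the index function at level n'
    haveI : NeZero (p ^ n') := ⟨pow_ne_zero _ hp.pos.ne'⟩
    have huZ : IsUnit (PadicInt.toZModPow n' χ) := hχunit.map _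
    obtain ⟨u, huval⟩ := huZ
    set a : G → ZMod (p ^ n') := fun g => (↑u⁻¹ : ZMod (p ^ n')) * PadicInt.toZModPow n' (θ g)
      with hadef
    have hθa : ∀ g, PadicInt.toZModPow n' (θ g) = a g * u := by
      intro g
      simp only [hadef]
      rw [mul_comm ((↑u⁻¹ : ZMod (p ^ n'))) _, mul_assoc, Units.inv_mul, mul_one]
    set H : G → M := fun g => h (a g).val with hHdef
    have Hlc : IsLocallyConstant H := by
      have h1 : IsLocallyConstant (fun g => PadicInt.toZModPow n' (θ g)) :=
        (lc_toZModPow p n').comp_continuous θcont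
      exact h1.comp (fun c => h (((↑u⁻¹ : ZMod (p ^ n')) * c).val))
    refine ⟨⟨H, Hlc⟩, ?_⟩
    intro g
    have hag : a (γ⁻¹ * g) = a g - 1 := by
      simp only [hadef]
      rw [θmul, θinv, ← hχdef, map_add, map_neg, ← huval, mul_add, mul_neg, Units.inv_mul]
      ring
    set b : ℕ := (a g - 1).val with hbdef
    have hb1 : ((b : ZMod (p ^ n')) + 1) = a g := by
      rw [hbdef, ZMod.natCast_val, ZMod.cast_id, sub_add_cancel]
    have key1 : h (b + 1) = h ((a g).val) := by
      by_cases hc : b + 1 = p ^ n'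
      · have ha0 : a g = 0 := by
          rw [← hb1, ← Nat.cast_one, ← Nat.cast_add, hc, ZMod.natCast_self]
        have hN'0 : h (p ^ n') = 0 := by
          have h2 := hhN'
          rw [hN'def] at h2
          exact h2
        rw [ha0, ZMod.val_zero, hc, hN'0, h0]
      · have hlt : b + 1 < p ^ n' := by
          have := ZMod.val_lt (a g - 1)
          omega
        have hv : (a g).val = b + 1 := by
          rw [← hb1, ← Nat.cast_one, ← Nat.cast_add, ZMod.val_natCast_of_lt hlt]
        rw [hv]
    have hfg : f (γ ^ (b + 1)) = f g := by
      apply hfc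
      apply lv_mono p hnn'
      rw [θpow, map_sub, map_mul, map_natCast, hθa g, ← huval, Nat.cast_add, Nat.cast_one,
        hb1, sub_self]
    have hHg1 : H (γ⁻¹ * g) = h b := by
      simp only [hHdef]
      rw [hag, ← hbdef]
    have hHg2 : H g = h ((a g).val) := by simp only [hHdef]
    show E (H (γ⁻¹ * g)) - H g = f g
    rw [hHg1, hHg2, ← key1, hrec b, ← hfg]
    abel
  -- injectivity
  have part2 : ∀ x y : M, (∀ g : G, ρ g x = ρ g y) → x = y := by
    intro x y hxy
    have h1 := hxy 1
    rw [map_one] at h1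
    simpa using h1
  -- exactness in the middle
  have part3 : ∀ f : LocallyConstant G M,
      (∀ g : G, ρ γ (f (γ⁻¹ * g)) - f g = 0) ↔ (∃ x : M, ∀ g : G, f g = ρ g x) := by
    intro f
    constructor
    · intro hker
      obtain ⟨n₁, hn₁⟩ := hconst f
      obtain ⟨s, hs⟩ := hstab (f 1)
      have hshift : ∀ g : G, f (γ * g) = ρ γ (f g) := by
        intro g
        have h1 := hker (γ * g)
        rw [inv_mul_cancel_left] at h1
        exact (sub_eq_zero.mp h1).symm
      have hpow : ∀ i : ℕ, f (γ ^ i) = (ρ γ ^ i) (f 1) := by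
        intro i
        induction i with
        | zero => simp
        | succ i ih =>
          rw [pow_succ' γ i, hshift, ih, pow_succ', Module.End.mul_apply]
      haveI : NeZero (p ^ max n₁ s) := ⟨pow_ne_zero _ hp.pos.ne'⟩
      have huZ : IsUnit (PadicInt.toZModPow (max n₁ s) χ) := hχunit.map _
      obtain ⟨uu, huu⟩ := huZ
      have hcancel : ∀ t : ZMod (p ^ max n₁ s),
          ((↑uu⁻¹ : ZMod (p ^ max n₁ s)) * t) * ↑uu = t := by
        intro t
        rw [mul_comm ((↑uu⁻¹ : ZMod (p ^ max n₁ s))) t, mul_assoc, Units.inv_mul,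
          mul_one]
      refine ⟨f 1, fun g => ?_⟩
      set i : ℕ := ((↑uu⁻¹ : ZMod (p ^ max n₁ s))
        * PadicInt.toZModPow (max n₁ s) (θ g)).val with hidef
      have hiz : ((i : ZMod (p ^ max n₁ s))) * PadicInt.toZModPow (max n₁ s) χ
          = PadicInt.toZModPow (max n₁ s) (θ g) := by
        rw [hidef, ZMod.natCast_val, ZMod.cast_id, ← huu, hcancel]
      have hrem : PadicInt.toZModPow (max n₁ s) (θ ((γ ^ i)⁻¹ * g)) = 0 := by
        rw [θmul, θinv, θpow, map_add, map_neg, map_mul, map_natCast, hiz, neg_add_cancel]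
      have hθdiff : θ g - θ (γ ^ i) = θ ((γ ^ i)⁻¹ * g) := by
        rw [θmul, θinv]
        ring
      have hcong : f g = f (γ ^ i) :=
        hn₁ _ _ (by rw [hθdiff]; exact lv_mono p (le_max_left _ _) hrem)
      have hfix : ρ ((γ ^ i)⁻¹ * g) (f 1) = f 1 := hs _ (lv_mono p (le_max_right _ _) hrem)
      calc f g = f (γ ^ i) := hcong
        _ = (ρ γ ^ i) (f 1) := hpow i
        _ = ρ (γ ^ i) (f 1) := by rw [map_pow]
        _ = ρ (γ ^ i) (ρ ((γ ^ i)⁻¹ * g) (f 1)) := by rw [hfix]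
        _ = ρ (γ ^ i * ((γ ^ i)⁻¹ * g)) (f 1) := by
              rw [map_mul ρ (γ ^ i) ((γ ^ i)⁻¹ * g), Module.End.mul_apply]
        _ = ρ g (f 1) := by rw [mul_inv_cancel_left]
    · rintro ⟨x, hx⟩ g
      rw [hx, hx, ← Module.End.mul_apply, ← map_mul, mul_inv_cancel_left, sub_self]
  exact ⟨main, part2, part3⟩
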